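/- Vanishing by containment: with λ, μ strict partitions of length r and D_{ij} = Σ_{k≥0} β^k C(i-j,k) h_{μ_i - λ_j + k}(b_1,…,b_{λ_j}; -c_1,…,-c_{μ_i-1}), if there exists an index a with λ_a > μ_a, then det(D) = 0. -/
import Mathlib


open Finset

/-- Generalized binomial coefficient `C(z, k) = z(z-1)⋯(z-k+1)/k!` for `z : ℤ`. -/
noncomputable def gbinom {K : Type*} [Field K] (z : ℤ) (k : ℕ) : K :=
  (∏ i ∈ Finset.range k, ((z : K) - (i : K))) / (Nat.factorial k : K)

/-- Complete homogeneous symmetric function `h_p` of `a` variables. -/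
def hpoly {K : Type*} [CommRing K] (a : ℕ) (v : ℕ → K) (p : ℕ) : K :=
  ∑ dd ∈ Finset.Nat.antidiagonalTuple a p, ∏ i : Fin a, v i ^ dd i

/-- Elementary symmetric function `e_t` of `a` variables. -/
def epoly {K : Type*} [CommRing K] (a : ℕ) (v : ℕ → K) (t : ℕ) : K :=
  ∑ S ∈ Finset.powersetCard t (Finset.range a), ∏ i ∈ S, v i

/-- Supersymmetric complete homogeneous function `h_p(b₁,…,b_a; -c₁,…,-c_C)`,
zero for `p < 0`. -/
noncomputable def hsup {K : Type*} [CommRing K] (a C : ℕ) (b c : ℕ → K) (p : ℤ) : K :=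
  if 0 ≤ p then
    ∑ t ∈ Finset.range (p.toNat + 1), (-1 : K) ^ t * epoly C c t * hpoly a b (p.toNat - t)
  else 0

/-- Monotonicity bound for a strictly decreasing `Fin r → ℕ`. -/
lemma strict_anti_bound {r : ℕ} (f : Fin r → ℕ)
    (hf : ∀ i j : Fin r, i < j → f j < f i) (i j : Fin r) (hij : i ≤ j) :
    (f j : ℤ) + (j : ℤ) ≤ (f i : ℤ) + (i : ℤ) := by
  rcases i with ⟨iv, hi⟩
  rcases j with ⟨jv, hj⟩
  simp only [Fin.le_def] at hij
  have H : ∀ n (hn : iv ≤ n) (hnr : n < r),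
      (f ⟨n, hnr⟩ : ℤ) + n ≤ (f ⟨iv, hi⟩ : ℤ) + iv := by
    intro n hn
    induction n, hn using Nat.le_induction with
    | base => intro _; simp
    | succ m hm ih =>
      intro hmr
      have hm' : m < r := by omega
      have h1 := hf ⟨m, hm'⟩ ⟨m + 1, hmr⟩ (by simp [Fin.lt_def])
      have h2 := ih hm'
      push_cast at h1 h2 ⊢
      omega
  exact H jv hij hj

theorem stmt_11 {K : Type*} [Field K] [CharZero K] (β : K) (r : ℕ)
    (lam mu : Fin r → ℕ) (b c : ℕ → K)
    (hlam : ∀ i j : Fin r, i < j → lam j < lam i) (hlampos : ∀ i, 0 < lam i)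
    (hmu : ∀ i j : Fin r, i < j → mu j < mu i) (hmupos : ∀ i, 0 < mu i)
    (ha : ∃ a : Fin r, mu a < lam a)
    (D : Matrix (Fin r) (Fin r) K)
    (hD : ∀ i j, D i j = ∑ᶠ k : ℕ,
      β ^ k * gbinom (K := K) ((i : ℤ) - (j : ℤ)) k *
        hsup (lam j) (mu i - 1) b c ((mu i : ℤ) - (lam j : ℤ) + k)) :
    D.det = 0 := by
  obtain ⟨a, haa⟩ := ha
  -- the zero block
  have hzero : ∀ i j : Fin r, j ≤ a → a ≤ i → D i j = 0 := by
    intro i j hja hai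
    rw [hD]
    apply finsum_eq_zero_of_forall_eq_zero
    intro k
    by_cases hk : (k : ℤ) ≤ (i : ℤ) - (j : ℤ)
    · -- hsup argument negative
      have h1 := strict_anti_bound mu hmu a i hai
      have h2 := strict_anti_bound lam hlam j a hja
      have hneg : (mu i : ℤ) - (lam j : ℤ) + k < 0 := by omega
      rw [hsup, if_neg (by omega)]
      ring
    · -- binomial coefficient vanishes
      have hij : (j : ℕ) ≤ (i : ℕ) := by
        have := Fin.le_def.mp hja
        have := Fin.le_def.mp hai
        omega
      have hmem : (i : ℕ) - (j : ℕ) ∈ Finset.range k := by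
        rw [Finset.mem_range]; omega
      have hbin : gbinom (K := K) ((i : ℤ) - (j : ℤ)) k = 0 := by
        rw [gbinom]
        rw [Finset.prod_eq_zero hmem]
        · simp
        · push_cast [Nat.cast_sub hij]
          ring
      rw [hbin]
      ring
  -- pigeonhole: every permutation hits the zero block
  rw [Matrix.det_apply]
  apply Finset.sum_eq_zero
  intro σ _
  have hex : ∃ j : Fin r, j ≤ a ∧ a ≤ σ j := by
    by_contra h
    push_neg at h
    have hmap : ∀ j ∈ Finset.Iic a, σ j ∈ Finset.Iio a := by
      intro j hj
      exact Finset.mem_Iio.2 (h j (Finset.mem_Iic.1 hj))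
    have hcard := Finset.card_le_card_of_injOn σ hmap (σ.injective.injOn)
    rw [Fin.card_Iic, Fin.card_Iio] at hcard
    omega
  obtain ⟨j, hj1, hj2⟩ := hex
  have : D (σ j) j = 0 := hzero (σ j) j hj1 hj2
  have hp : ∏ i : Fin r, D (σ i) i = 0 := Finset.prod_eq_zero (Finset.mem_univ j) this
  rw [hp]
  simp
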